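/- Let F ⊆ ℝⁿ be non-empty and bounded, let r₀ > 0 and s > 0. Suppose there exists c > 0 such that ∫_{B(x,r)} dist(y,F)^{s−n} dy ≤ c·r^s for all x ∈ F and all 0 < r < r₀. Then there exists c' > 0 such that ∫_{B(x,r)} dist(y,F)^{s−n} dy ≤ c'·r^s for all x ∈ F and all r > 0. (Equivalently, for bounded non-empty F the truncated Aikawa condition I_A^{r₀}(F) coincides with the untruncated one I_A(F).) -/

import Mathlib

open Metric MeasureTheory Set
open scoped ENNReal

private lemma ennreal_rpow_anti {x y : ℝ≥0∞} {p : ℝ} (hxy : x ≤ y) (hp : p ≤ 0) :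
    y ^ p ≤ x ^ p := by
  rw [← neg_neg p, ENNReal.rpow_neg x, ENNReal.rpow_neg y]
  exact ENNReal.inv_le_inv' (ENNReal.rpow_le_rpow hxy (by linarith))

set_option maxHeartbeats 1000000 in
/-- Let F ⊆ ℝⁿ be non-empty and bounded, r₀ > 0, s > 0. If there
is c > 0 with ∫_{B(x,r)} dist(y,F)^{s−n} dy ≤ c·rˢ for all x ∈ F and 0 < r < r₀,
then there is c' > 0 with ∫_{B(x,r)} dist(y,F)^{s−n} dy ≤ c'·rˢ for all x ∈ F
and all r > 0. (Powers of the distance are taken in ℝ≥0∞, so that 0^{s−n} = ∞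
for s < n and 0^0 = 1, matching the stated convention.) -/
theorem statement18
    (n : ℕ) (hn : 1 ≤ n)
    (F : Set (EuclideanSpace ℝ (Fin n)))
    (hFne : F.Nonempty) (hFbdd : Bornology.IsBounded F)
    (r₀ s : ℝ) (hr₀ : 0 < r₀) (hs : 0 < s)
    (c : ℝ) (hc : 0 < c)
    (h : ∀ x ∈ F, ∀ r : ℝ, 0 < r → r < r₀ →
      (∫⁻ y in Metric.closedBall x r,
        ENNReal.ofReal (Metric.infDist y F) ^ (s - (n : ℝ)))
        ≤ ENNReal.ofReal (c * r ^ s)) :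
    ∃ c' : ℝ, 0 < c' ∧ ∀ x ∈ F, ∀ r : ℝ, 0 < r →
      (∫⁻ y in Metric.closedBall x r,
        ENNReal.ofReal (Metric.infDist y F) ^ (s - (n : ℝ)))
        ≤ ENNReal.ofReal (c' * r ^ s) := by
  classical
  set f : EuclideanSpace ℝ (Fin n) → ℝ≥0∞ :=
    fun y => ENNReal.ofReal (Metric.infDist y F) ^ (s - (n : ℝ)) with hfdef
  obtain ⟨x₀, hx₀F⟩ := hFne
  obtain ⟨D₀, hD₀⟩ := hFbdd.subset_closedBall x₀
  set D : ℝ := max D₀ 0 with hDdef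
  have hD0 : (0:ℝ) ≤ D := le_max_right _ _
  have hDF : F ⊆ closedBall x₀ D :=
    hD₀.trans (closedBall_subset_closedBall (le_max_left _ _))
  -- Fact A : points close to F are close to x₀
  have hA : ∀ (y : EuclideanSpace ℝ (Fin n)) (u : ℝ), infDist y F ≤ u →
      dist y x₀ ≤ D + u := by
    intro y u hu
    refine le_of_forall_pos_le_add fun ε hε => ?_
    have h1 : infDist y F < u + ε := lt_of_le_of_lt hu (by linarith)
    obtain ⟨z, hzF, hz⟩ := (infDist_lt_iff ⟨x₀, hx₀F⟩).1 h1
    have h2 : dist z x₀ ≤ D := hDF hzF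
    calc dist y x₀ ≤ dist y z + dist z x₀ := dist_triangle _ _ _
      _ ≤ (u + ε) + D := by linarith
      _ = D + u + ε := by ring
  set t : ℝ := r₀ / 4 with htdef
  have ht : 0 < t := by positivity
  set V : ℝ≥0∞ := volume (closedBall (0 : EuclideanSpace ℝ (Fin n)) 1) with hVdef
  have hVtop : V ≠ ⊤ := measure_closedBall_lt_top.ne
  set V' : ℝ := V.toReal with hV'def
  have hV'0 : (0:ℝ) ≤ V' := ENNReal.toReal_nonneg
  have hVV' : V = ENNReal.ofReal V' := (ENNReal.ofReal_toReal hVtop).symm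
  have hBall : ∀ (x : EuclideanSpace ℝ (Fin n)) (R : ℝ), 0 ≤ R →
      volume (closedBall x R) = ENNReal.ofReal (R ^ n) * V := by
    intro x R hR
    rw [Measure.addHaar_closedBall' volume x hR, finrank_euclideanSpace_fin]
  -- the near part : a uniform bound on the integral over the t-neighborhood of F
  obtain ⟨A, hA0, hNear⟩ : ∃ A : ℝ, 0 ≤ A ∧
      ∫⁻ y in {y | infDist y F ≤ t}, f y ≤ ENNReal.ofReal A := by
    have htb : TotallyBounded F := hFbdd.isCompact_closure.totallyBounded.subset
      subset_closure
    obtain ⟨T, hTF, hTfin, hTcov⟩ := totallyBounded_iff_subset.1 htb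
      {p | dist p.1 p.2 < t} (Metric.dist_mem_uniformity ht)
    have : Countable ↥T := hTfin.countable.to_subtype
    have hcover : {y | infDist y F ≤ t} ⊆ ⋃ (z : ↥T), closedBall (z : EuclideanSpace ℝ (Fin n)) (3 * t) := by
      intro y hy
      have h1 : infDist y F < t + t / 2 := lt_of_le_of_lt hy (by linarith)
      obtain ⟨z, hzF, hz⟩ := (infDist_lt_iff ⟨x₀, hx₀F⟩).1 h1
      obtain ⟨w, hwT, hw⟩ := by simpa using hTcov hzF
      refine mem_iUnion.2 ⟨⟨w, hwT⟩, ?_⟩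
      simp only [mem_closedBall]
      calc dist y w ≤ dist y z + dist z w := dist_triangle _ _ _
        _ ≤ (t + t / 2) + t := by exact add_le_add hz.le hw.le
        _ ≤ 3 * t := by linarith
    have hball : ∀ z : ↥T, ∫⁻ y in closedBall (z : EuclideanSpace ℝ (Fin n)) (3 * t), f y
        ≤ ENNReal.ofReal (c * (3 * t) ^ s) := by
      intro z
      exact h z (hTF z.2) (3 * t) (by linarith)
        (by rw [htdef]; linarith)
    have hfin : Fintype ↥T := hTfin.fintype
    refine ⟨(Fintype.card ↥T : ℝ) * (c * (3 * t) ^ s), by positivity, ?_⟩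
    calc ∫⁻ y in {y | infDist y F ≤ t}, f y
        ≤ ∫⁻ y in ⋃ (z : ↥T), closedBall (z : EuclideanSpace ℝ (Fin n)) (3 * t), f y :=
          lintegral_mono_set hcover
      _ ≤ ∑' (z : ↥T), ∫⁻ y in closedBall (z : EuclideanSpace ℝ (Fin n)) (3 * t), f y :=
          lintegral_iUnion_le _ _
      _ ≤ ∑' (_ : ↥T), ENNReal.ofReal (c * (3 * t) ^ s) := ENNReal.tsum_le_tsum hball
      _ = (Fintype.card ↥T) * ENNReal.ofReal (c * (3 * t) ^ s) := by
          rw [tsum_eq_sum (s := Finset.univ) (by simp), Finset.sum_const,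
            Finset.card_univ, nsmul_eq_mul]
      _ = ENNReal.ofReal ((Fintype.card ↥T : ℝ) * (c * (3 * t) ^ s)) :=
          by symm; rw [ENNReal.ofReal_mul (by positivity), ENNReal.ofReal_natCast]
  -- constants for the far part
  set a : ℝ := D / t + 2 with hadef
  have ha0 : (0:ℝ) ≤ a := by positivity
  set C : ℝ := a ^ n * t ^ s * V' with hCdef
  have hC0 : (0:ℝ) ≤ C := by positivity
  have h2s : (1:ℝ) < 2 ^ s := by
    rw [Real.one_lt_rpow_iff_of_pos (by norm_num)]
    exact Or.inl ⟨one_lt_two, hs⟩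
  set B : ℝ := C * (2 / t) ^ s / (2 ^ s - 1) with hBdef
  have hB0 : (0:ℝ) ≤ B := by
    apply div_nonneg _ (by linarith)
    positivity
  -- the far part
  have hFar : ∀ x ∈ F, ∀ r : ℝ, r₀ ≤ r → s < (n:ℝ) →
      ∫⁻ y in closedBall x r ∩ {y | t < infDist y F}, f y
        ≤ ENNReal.ofReal (B * r ^ s) := by
    intro x hxF r hrr₀ hsn
    have hr : 0 < r := lt_of_lt_of_le hr₀ hrr₀
    set S : ℕ → Set (EuclideanSpace ℝ (Fin n)) := fun k =>
      closedBall x r ∩ {y | 2 ^ k * t < infDist y F ∧ infDist y F ≤ 2 ^ (k + 1) * t}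
      with hSdef
    have hSm : ∀ k, MeasurableSet (S k) := by
      intro k
      apply measurableSet_closedBall.inter
      exact (continuous_infDist_pt F).measurable
        (measurableSet_Ioc : MeasurableSet (Ioc (2 ^ k * t) (2 ^ (k+1) * t)))
    -- the shells cover the far region
    have hsub : closedBall x r ∩ {y | t < infDist y F} ⊆ ⋃ k, S k := by
      rintro y ⟨hyB, hyt⟩
      have hex : ∃ m : ℕ, infDist y F ≤ 2 ^ (m + 1) * t := by
        obtain ⟨m, hm⟩ := pow_unbounded_of_one_lt (infDist y F / t) (one_lt_two (α := ℝ))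
        refine ⟨m, ?_⟩
        have h1 : infDist y F < 2 ^ m * t := (div_lt_iff₀ ht).1 hm
        have h2 : (2:ℝ) ^ m ≤ 2 ^ (m + 1) := pow_le_pow_right₀ one_le_two (Nat.le_succ m)
        nlinarith
      have hk2 : 2 ^ (Nat.find hex) * t < infDist y F := by
        rcases Nat.eq_zero_or_pos (Nat.find hex) with h0 | hpos
        · rw [h0]
          simpa using hyt
        · obtain ⟨j, hj⟩ := Nat.exists_eq_succ_of_ne_zero hpos.ne'
          have hmin := Nat.find_min hex (m := j) (by omega)
          push_neg at hmin
          rw [hj]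
          exact hmin
      exact mem_iUnion.2 ⟨Nat.find hex, hyB, hk2, Nat.find_spec hex⟩
    -- bound for each shell
    have hterm : ∀ k : ℕ, ∫⁻ y in S k, f y ≤
        if 2 ^ k * t < r then ENNReal.ofReal (C * (2 ^ s) ^ k) else 0 := by
      intro k
      by_cases hk : 2 ^ k * t < r
      · rw [if_pos hk]
        set u : ℝ := 2 ^ k * t with hudef
        have hu0 : 0 < u := by positivity
        have htu : t ≤ u := by
          have h1k : (1:ℝ) ≤ 2 ^ k := by
            calc (1:ℝ) = 1 ^ k := (one_pow k).symm
              _ ≤ 2 ^ k := pow_le_pow_left₀ zero_le_one one_le_two k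
          nlinarith
        have hu2 : (2:ℝ) ^ (k + 1) * t = 2 * u := by rw [hudef]; ring
        -- pointwise bound on the shell
        have hfb : ∀ y ∈ S k, f y ≤ ENNReal.ofReal u ^ (s - (n : ℝ)) := by
          intro y hy
          exact ennreal_rpow_anti (ENNReal.ofReal_le_ofReal hy.2.1.le) (by linarith)
        -- measure bound for the shell
        have hSsub : S k ⊆ closedBall x₀ (D + 2 * u) := by
          intro y hy
          rw [mem_closedBall]
          exact hA y (2 * u) (hu2 ▸ hy.2.2)
        have hmb : volume (S k) ≤ ENNReal.ofReal ((D + 2 * u) ^ n) * V := by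
          rw [← hBall x₀ (D + 2 * u) (by positivity)]
          exact measure_mono hSsub
        calc ∫⁻ y in S k, f y
            ≤ ∫⁻ _ in S k, ENNReal.ofReal u ^ (s - (n : ℝ)) :=
              setLIntegral_mono' (hSm k) hfb
          _ = ENNReal.ofReal u ^ (s - (n : ℝ)) * volume (S k) := setLIntegral_const _ _
          _ ≤ ENNReal.ofReal (u ^ (s - (n : ℝ))) *
              (ENNReal.ofReal ((D + 2 * u) ^ n) * ENNReal.ofReal V') := by
              rw [ENNReal.ofReal_rpow_of_pos hu0]
              exact mul_le_mul_right (hVV' ▸ hmb) _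
          _ = ENNReal.ofReal (u ^ (s - (n : ℝ)) * ((D + 2 * u) ^ n * V')) := by
              rw [ENNReal.ofReal_mul (by positivity), ENNReal.ofReal_mul (by positivity)]
          _ ≤ ENNReal.ofReal (C * (2 ^ s) ^ k) := by
              apply ENNReal.ofReal_le_ofReal
              have hDa : D + 2 * u ≤ a * u := by
                have h1 : D / t * t ≤ D / t * u :=
                  mul_le_mul_of_nonneg_left htu (by positivity)
                have h2 : D / t * t = D := by field_simp
                rw [hadef]; nlinarith
              have h3 : (D + 2 * u) ^ n ≤ (a * u) ^ n :=
                pow_le_pow_left₀ (by positivity) hDa n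
              have h4 : u ^ (s - (n:ℝ)) * u ^ (n:ℕ) = u ^ s := by
                rw [← Real.rpow_natCast u n, ← Real.rpow_add hu0]
                ring_nf
              have h5 : u ^ s = (2 ^ s) ^ k * t ^ s := by
                rw [hudef, Real.mul_rpow (by positivity) ht.le,
                  ← Real.rpow_natCast (2:ℝ) k, ← Real.rpow_mul (by norm_num),
                  mul_comm (k:ℝ) s, Real.rpow_mul (by norm_num),
                  Real.rpow_natCast]
              have h6 : u ^ (s - (n:ℝ)) * ((D + 2 * u) ^ n * V')
                  ≤ u ^ (s - (n:ℝ)) * ((a * u) ^ n * V') := by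
                apply mul_le_mul_of_nonneg_left _ (by positivity)
                exact mul_le_mul_of_nonneg_right h3 hV'0
              calc u ^ (s - (n:ℝ)) * ((D + 2 * u) ^ n * V')
                  ≤ u ^ (s - (n:ℝ)) * ((a * u) ^ n * V') := h6
                _ = a ^ n * (u ^ (s - (n:ℝ)) * u ^ (n:ℕ)) * V' := by
                    rw [mul_pow]; ring
                _ = a ^ n * ((2 ^ s) ^ k * t ^ s) * V' := by rw [h4, h5]
                _ = C * (2 ^ s) ^ k := by rw [hCdef]; ring
      · rw [if_neg hk]
        push_neg at hk
        have hSempty : S k = ∅ := by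
          rw [eq_empty_iff_forall_notMem]
          rintro y ⟨hyB, hy1, _⟩
          have : infDist y F ≤ r :=
            le_trans (infDist_le_dist_of_mem hxF) (mem_closedBall.1 hyB)
          linarith
        rw [hSempty]
        simp
    -- choose the cutoff K
    have hexK : ∃ K : ℕ, r ≤ 2 ^ K * t := by
      obtain ⟨K, hK⟩ := pow_unbounded_of_one_lt (r / t) (one_lt_two (α := ℝ))
      exact ⟨K, ((div_lt_iff₀ ht).1 hK).le⟩
    set K : ℕ := Nat.find hexK with hKdef
    have hKspec : r ≤ 2 ^ K * t := Nat.find_spec hexK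
    have htr : t < r := by
      rw [htdef]; linarith
    have hKpos : K ≠ 0 := by
      intro h0
      rw [h0, pow_zero, one_mul] at hKspec
      linarith
    have hKmin : 2 ^ (K - 1) * t < r := by
      have h9 := Nat.find_min hexK (m := K - 1) (by omega)
      push_neg at h9
      exact h9
    have h2K : (2:ℝ) ^ K ≤ 2 / t * r := by
      have h1 : (2:ℝ) ^ K = 2 * 2 ^ (K - 1) := by
        rw [← pow_succ']
        congr 1
        omega
      rw [h1]
      rw [div_mul_eq_mul_div, le_div_iff₀ ht]
      nlinarith
    have hout : ∀ k ∉ Finset.range K,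
        (if 2 ^ k * t < r then ENNReal.ofReal (C * (2 ^ s) ^ k) else 0) = 0 := by
      intro k hk
      rw [Finset.mem_range, not_lt] at hk
      rw [if_neg]
      push_neg
      calc r ≤ 2 ^ K * t := hKspec
        _ ≤ 2 ^ k * t := by
          apply mul_le_mul_of_nonneg_right _ ht.le
          exact pow_le_pow_right₀ one_le_two hk
    -- sum the geometric series
    have hgeom : ∑ k ∈ Finset.range K, C * (2 ^ s) ^ k ≤ B * r ^ s := by
      rw [← Finset.mul_sum, geom_sum_eq (by linarith : (2:ℝ) ^ s ≠ 1)]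
      have h1 : ((2:ℝ) ^ s) ^ K ≤ (2 / t * r) ^ s := by
        rw [← Real.rpow_natCast ((2:ℝ) ^ s) K, ← Real.rpow_mul (by positivity),
          mul_comm s (K:ℝ), Real.rpow_mul (by norm_num : (0:ℝ) ≤ 2),
          Real.rpow_natCast]
        exact Real.rpow_le_rpow (by positivity) h2K hs.le
      have h2 : (2 / t * r) ^ s = (2 / t) ^ s * r ^ s :=
        Real.mul_rpow (by positivity) hr.le
      have h3 : C * ((2 ^ s) ^ K - 1) ≤ C * (2 / t) ^ s * r ^ s := by
        calc C * ((2 ^ s) ^ K - 1) ≤ C * (2 / t * r) ^ s := by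
              apply mul_le_mul_of_nonneg_left _ hC0
              linarith
          _ = C * (2 / t) ^ s * r ^ s := by rw [h2]; ring
      calc C * (((2 ^ s) ^ K - 1) / (2 ^ s - 1))
          = C * ((2 ^ s) ^ K - 1) / (2 ^ s - 1) := (mul_div_assoc _ _ _).symm
        _ ≤ C * (2 / t) ^ s * r ^ s / (2 ^ s - 1) :=
            (div_le_div_iff_of_pos_right (by linarith)).2 h3
        _ = B * r ^ s := by rw [hBdef]; ring
    calc ∫⁻ y in closedBall x r ∩ {y | t < infDist y F}, f y
        ≤ ∫⁻ y in ⋃ k, S k, f y := lintegral_mono_set hsub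
      _ ≤ ∑' k, ∫⁻ y in S k, f y := lintegral_iUnion_le _ _
      _ ≤ ∑' k, (if 2 ^ k * t < r then ENNReal.ofReal (C * (2 ^ s) ^ k) else 0) :=
          ENNReal.tsum_le_tsum hterm
      _ = ∑ k ∈ Finset.range K,
            (if 2 ^ k * t < r then ENNReal.ofReal (C * (2 ^ s) ^ k) else 0) :=
          tsum_eq_sum hout
      _ ≤ ∑ k ∈ Finset.range K, ENNReal.ofReal (C * (2 ^ s) ^ k) := by
          apply Finset.sum_le_sum
          intro k _
          split_ifs
          · exact le_rfl
          · exact zero_le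
      _ = ENNReal.ofReal (∑ k ∈ Finset.range K, C * (2 ^ s) ^ k) := by
          rw [ENNReal.ofReal_sum_of_nonneg]
          intro k _
          positivity
      _ ≤ ENNReal.ofReal (B * r ^ s) := ENNReal.ofReal_le_ofReal hgeom
  -- assemble
  set c' : ℝ := c + A / r₀ ^ s + B + V' + 1 with hc'def
  have hr₀s : (0:ℝ) < r₀ ^ s := Real.rpow_pos_of_pos hr₀ s
  have hc' : 0 < c' := by
    have : (0:ℝ) ≤ A / r₀ ^ s := by positivity
    rw [hc'def]; linarith
  refine ⟨c', hc', ?_⟩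
  intro x hxF r hr
  have hrs0 : (0:ℝ) ≤ r ^ s := (Real.rpow_pos_of_pos hr s).le
  by_cases hsn : s < (n:ℝ)
  · -- subcritical case
    by_cases hrr : r < r₀
    · -- small radii : use the hypothesis
      refine (h x hxF r hr hrr).trans (ENNReal.ofReal_le_ofReal ?_)
      have : (0:ℝ) ≤ A / r₀ ^ s := by positivity
      have hcc' : c ≤ c' := by rw [hc'def]; linarith
      nlinarith
    · push_neg at hrr
      have hdecomp : closedBall x r ⊆
          {y | infDist y F ≤ t} ∪ (closedBall x r ∩ {y | t < infDist y F}) := by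
        intro y hy
        rcases le_or_gt (infDist y F) t with h1 | h1
        · exact Or.inl h1
        · exact Or.inr ⟨hy, h1⟩
      have hrsr₀ : r₀ ^ s ≤ r ^ s := Real.rpow_le_rpow hr₀.le hrr hs.le
      calc ∫⁻ y in closedBall x r, f y
          ≤ ∫⁻ y in {y | infDist y F ≤ t} ∪
              (closedBall x r ∩ {y | t < infDist y F}), f y :=
            lintegral_mono_set hdecomp
        _ ≤ (∫⁻ y in {y | infDist y F ≤ t}, f y) +
              ∫⁻ y in closedBall x r ∩ {y | t < infDist y F}, f y :=
            lintegral_union_le _ _ _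
        _ ≤ ENNReal.ofReal A + ENNReal.ofReal (B * r ^ s) :=
            add_le_add hNear (hFar x hxF r hrr hsn)
        _ = ENNReal.ofReal (A + B * r ^ s) := (ENNReal.ofReal_add hA0 (by positivity)).symm
        _ ≤ ENNReal.ofReal (c' * r ^ s) := by
            apply ENNReal.ofReal_le_ofReal
            have h1 : A ≤ A / r₀ ^ s * r ^ s := by
              rw [div_mul_eq_mul_div, le_div_iff₀ hr₀s]
              exact mul_le_mul_of_nonneg_left hrsr₀ hA0
            have h2 : (0:ℝ) ≤ A / r₀ ^ s := by positivity
            rw [hc'def]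
            nlinarith
  · -- supercritical case : trivial bound
    push_neg at hsn
    have hfb : ∀ y ∈ closedBall x r, f y ≤ ENNReal.ofReal r ^ (s - (n:ℝ)) := by
      intro y hy
      have h1 : infDist y F ≤ r :=
        le_trans (infDist_le_dist_of_mem hxF) (mem_closedBall.1 hy)
      exact ENNReal.rpow_le_rpow (ENNReal.ofReal_le_ofReal h1) (by linarith)
    calc ∫⁻ y in closedBall x r, f y
        ≤ ∫⁻ _ in closedBall x r, ENNReal.ofReal r ^ (s - (n:ℝ)) :=
          setLIntegral_mono' measurableSet_closedBall hfb
      _ = ENNReal.ofReal r ^ (s - (n:ℝ)) * volume (closedBall x r) :=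
          setLIntegral_const _ _
      _ = ENNReal.ofReal (r ^ (s - (n:ℝ))) * (ENNReal.ofReal (r ^ n) * ENNReal.ofReal V') := by
          rw [ENNReal.ofReal_rpow_of_pos hr, hBall x r hr.le, hVV']
      _ = ENNReal.ofReal (r ^ (s - (n:ℝ)) * (r ^ (n:ℕ) * V')) := by
          rw [ENNReal.ofReal_mul (by positivity), ENNReal.ofReal_mul (by positivity)]
      _ ≤ ENNReal.ofReal (c' * r ^ s) := by
          apply ENNReal.ofReal_le_ofReal
          have h4 : r ^ (s - (n:ℝ)) * r ^ (n:ℕ) = r ^ s := by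
            rw [← Real.rpow_natCast r n, ← Real.rpow_add hr]
            ring_nf
          have hV'c' : V' ≤ c' := by
            have : (0:ℝ) ≤ A / r₀ ^ s := by positivity
            rw [hc'def]; linarith
          calc r ^ (s - (n:ℝ)) * (r ^ (n:ℕ) * V') = V' * r ^ s := by
                rw [← mul_assoc, h4]; ring
            _ ≤ c' * r ^ s := mul_le_mul_of_nonneg_right hV'c' hrs0
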